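/- Suppose a stochastic policy π and non-negative functions f : S → ℝ≥0 and g : S×A → ℝ≥0 on a layered MDP satisfy f(s_0) = 0 and, for all s ≠ s_0, f(s) ≤ ∑_{s' ∈ S_{k(s)−1}} ∑_{a'} g(s',a') P(s|s',a') + ∑_{s' ∈ S_{k(s)−1}} f(s') ∑_{a'} π(a'|s') P(s|s',a'). Then for all s ≠ s_0, f(s) ≤ ∑_{k=0}^{k(s)−1} ∑_{s' ∈ S_k} ∑_{a'} g(s',a') p^π(s|s',a'), where p^π is the reachability probability of π. -/

import Mathlib

open Finset

/-- Key induction lemma: if a stochastic policy `π` and non-negative functions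
`f : S → ℝ` and `g : S × A → ℝ` on a layered MDP satisfy `f s₀ = 0` and, for every
`s ≠ s₀`,
`f s ≤ ∑_{s' ∈ S_{k(s)-1}} ∑_{a'} g s' a' · P(s|s',a')
      + ∑_{s' ∈ S_{k(s)-1}} f s' · ∑_{a'} π(a'|s') P(s|s',a')`,
then for all `s ≠ s₀`,
`f s ≤ ∑_{k < k(s)} ∑_{s' ∈ S_k} ∑_{a'} g s' a' · p^π(s|s',a')`,
where `p^π` is the reachability probability (given by the recursion hypotheses). -/
theorem induction_state_reach_prob {S A : Type} [Fintype S] [Fintype A]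
    [DecidableEq S]
    (lay : S → ℕ) (L : ℕ) (s0 : S) (P : S → A → S → ℝ) (π : S → A → ℝ)
    (hlay0 : ∀ s, lay s = 0 ↔ s = s0)
    (hP0 : ∀ s a s', 0 ≤ P s a s')
    (hPlayer : ∀ s a s', P s a s' ≠ 0 → lay s' = lay s + 1)
    (hπ0 : ∀ s a, 0 ≤ π s a) (hπsum : ∀ s, ∑ a, π s a = 1)
    (p : S → A → S → ℝ)
    (hp0 : ∀ s a s', 0 ≤ p s a s')
    (hrec0 : ∀ s a s', lay s' ≤ lay s → p s a s' = 0)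
    (hrec1 : ∀ s a s', lay s' = lay s + 1 → p s a s' = P s a s')
    (hrec2 : ∀ s a s', lay s + 1 < lay s' →
      p s a s' = ∑ sm ∈ univ.filter (fun sm => lay sm = lay s' - 1),
        p s a sm * ∑ a', π sm a' * P sm a' s')
    (f : S → ℝ) (g : S → A → ℝ)
    (hf0 : ∀ s, 0 ≤ f s) (hg0 : ∀ s a, 0 ≤ g s a)
    (hfs0 : f s0 = 0)
    (hind : ∀ s, s ≠ s0 →
      f s ≤ (∑ s' ∈ univ.filter (fun s' => lay s' = lay s - 1), ∑ a', g s' a' * P s' a' s)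
        + ∑ s' ∈ univ.filter (fun s' => lay s' = lay s - 1),
            f s' * ∑ a', π s' a' * P s' a' s) :
    ∀ s, s ≠ s0 →
      f s ≤ ∑ k ∈ Finset.range (lay s), ∑ s' ∈ univ.filter (fun s' => lay s' = k),
        ∑ a', g s' a' * p s' a' s := by

  suffices h : ∀ n s, lay s = n → s ≠ s0 →
      f s ≤ ∑ k ∈ Finset.range (lay s), ∑ s' ∈ univ.filter (fun s' => lay s' = k),
        ∑ a', g s' a' * p s' a' s by
    exact fun s hs => h (lay s) s rfl hs
  intro n
  induction n using Nat.strong_induction_on with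
  | _ n ih =>
  intro s hls hs
  subst hls
  have hm : 1 ≤ lay s := Nat.one_le_iff_ne_zero.mpr (fun h0 => hs ((hlay0 s).mp h0))
  -- uniform bound from the induction hypothesis, also valid for s0
  have hT : ∀ s', lay s' < lay s → f s' ≤ ∑ k ∈ Finset.range (lay s'),
      ∑ u ∈ univ.filter (fun u => lay u = k), ∑ a, g u a * p u a s' := by
    intro s' hlt
    by_cases h0 : s' = s0
    · rw [h0, (hlay0 s0).mpr rfl, hfs0]
      simp
    · exact ih (lay s') hlt s' rfl h0
  have hw0 : ∀ s', (0:ℝ) ≤ ∑ a', π s' a' * P s' a' s :=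
    fun s' => Finset.sum_nonneg fun a _ => mul_nonneg (hπ0 _ _) (hP0 _ _ _)
  -- Bound the B term
  have hBle : ∑ s' ∈ univ.filter (fun s' => lay s' = lay s - 1),
        f s' * ∑ a', π s' a' * P s' a' s
      ≤ ∑ s' ∈ univ.filter (fun s' => lay s' = lay s - 1),
        (∑ k ∈ Finset.range (lay s - 1), ∑ u ∈ univ.filter (fun u => lay u = k),
          ∑ a, g u a * p u a s') * ∑ a', π s' a' * P s' a' s := by
    apply Finset.sum_le_sum
    intro s' hs'
    have hl : lay s' = lay s - 1 := (Finset.mem_filter.mp hs').2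
    have hb := hT s' (by omega)
    rw [hl] at hb
    exact mul_le_mul_of_nonneg_right hb (hw0 s')
  -- swap sums and use the recursion hrec2
  have hswap : ∑ s' ∈ univ.filter (fun s' => lay s' = lay s - 1),
        (∑ k ∈ Finset.range (lay s - 1), ∑ u ∈ univ.filter (fun u => lay u = k),
          ∑ a, g u a * p u a s') * ∑ a', π s' a' * P s' a' s
      = ∑ k ∈ Finset.range (lay s - 1), ∑ u ∈ univ.filter (fun u => lay u = k),
          ∑ a, g u a * p u a s := by
    simp only [Finset.sum_mul]
    rw [Finset.sum_comm]
    apply Finset.sum_congr rfl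
    intro k hk
    rw [Finset.sum_comm]
    apply Finset.sum_congr rfl
    intro u hu
    rw [Finset.sum_comm]
    apply Finset.sum_congr rfl
    intro a _
    have hku : lay u = k := (Finset.mem_filter.mp hu).2
    have hkr : k < lay s - 1 := Finset.mem_range.mp hk
    have hlt : lay u + 1 < lay s := by omega
    rw [hrec2 u a s hlt]
    rw [Finset.mul_sum]
    apply Finset.sum_congr rfl
    intro sm _
    ring
  -- rewrite the A term with p instead of P
  have hAeq : ∑ s' ∈ univ.filter (fun s' => lay s' = lay s - 1), ∑ a', g s' a' * P s' a' s
      = ∑ s' ∈ univ.filter (fun s' => lay s' = lay s - 1), ∑ a', g s' a' * p s' a' s := by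
    apply Finset.sum_congr rfl
    intro s' hs'
    have hl : lay s' = lay s - 1 := (Finset.mem_filter.mp hs').2
    apply Finset.sum_congr rfl
    intro a' _
    rw [hrec1 s' a' s (by omega)]
  have hsplit : ∑ k ∈ Finset.range (lay s), ∑ s' ∈ univ.filter (fun s' => lay s' = k),
        ∑ a', g s' a' * p s' a' s
      = (∑ k ∈ Finset.range (lay s - 1), ∑ s' ∈ univ.filter (fun s' => lay s' = k),
          ∑ a', g s' a' * p s' a' s)
        + ∑ s' ∈ univ.filter (fun s' => lay s' = lay s - 1), ∑ a', g s' a' * p s' a' s := by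
    conv_lhs => rw [show lay s = (lay s - 1) + 1 by omega]
    rw [Finset.sum_range_succ]
  have hstep := hind s hs
  rw [hAeq] at hstep
  rw [hswap] at hBle
  rw [hsplit]
  linarith
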